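/- For all real a > 0 and real w with |w| ≥ a^(1+δ) for some fixed δ ∈ (0,1), and for a sufficiently large, there exist constants β₁ > β₂ > 0 such that −β₁|w| ≤ Re F_a(iw) ≤ −β₂|w|, where F_a(z) = log Γ(z + a) − log Γ(a) − z log a + z/(2a). -/

import Mathlib

open Real Filter Finset


/-- `F_a(z) = log Γ(z + a) − log Γ(a) − z log a + z/(2a)`. -/
noncomputable def Fgamma (a : ℝ) (z : ℂ) : ℂ :=
  Complex.log (Complex.Gamma (z + (a : ℂ))) - Complex.log (Complex.Gamma (a : ℂ))
    - z * Complex.log (a : ℂ) + z / (2 * (a : ℂ))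

lemma my_reF_eq (a : ℝ) (ha : 0 < a) (w : ℝ) :
    (Fgamma a ((w : ℂ) * Complex.I)).re
      = Real.log (‖(Complex.Gamma ((a:ℂ) + (w:ℂ) * Complex.I))‖)
        - Real.log (Real.Gamma a) := by
  have hlog : Complex.log (a:ℂ) = ((Real.log a : ℝ) : ℂ) := (Complex.ofReal_log ha.le).symm
  have hcomm : (w:ℂ) * Complex.I + (a:ℂ) = (a:ℂ) + (w:ℂ) * Complex.I := by ring
  simp [Fgamma, hcomm, hlog, Complex.log_re, Complex.sub_re, Complex.add_re,
    Complex.div_re, Complex.mul_re, Complex.Gamma_ofReal, Complex.norm_real, Real.norm_eq_abs, Real.log_abs]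

lemma my_term_eq (t w : ℝ) (ht : 0 < t) :
    Real.log (t / ‖((t:ℂ) + (w:ℂ) * Complex.I)‖)
      = -(1/2) * Real.log (1 + w^2 / t^2) := by
  rw [Complex.norm_add_mul_I]
  have h1 : (0:ℝ) < t^2 + w^2 := by positivity
  rw [Real.log_div ht.ne' (by positivity), Real.log_sqrt h1.le]
  have h2 : 1 + w^2/t^2 = (t^2+w^2)/t^2 := by field_simp
  rw [h2, Real.log_div h1.ne' (by positivity), Real.log_pow]
  push_cast
  ring

lemma my_logratio (a w : ℝ) (ha : 0 < a) (n : ℕ) (hn : 1 ≤ n) :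
    Real.log (‖(Complex.GammaSeq ((a:ℂ) + (w:ℂ)*Complex.I) n)‖ / Real.GammaSeq a n)
      = -(1/2) * ∑ j ∈ Finset.range (n+1), Real.log (1 + w^2/(a+j)^2) := by
  have hnp : (0:ℝ) < (n:ℝ) := by exact_mod_cast hn
  set z : ℂ := (a:ℂ) + (w:ℂ)*Complex.I with hz
  have hzj : ∀ j : ℕ, z + (j:ℂ) = ((a + j : ℝ):ℂ) + (w:ℂ)*Complex.I := by
    intro j; push_cast [hz]; ring
  have habs : ‖(Complex.GammaSeq z n)‖
      = (n:ℝ)^a * (n.factorial : ℝ) / ∏ j ∈ Finset.range (n+1),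
          ‖(((a + j : ℝ):ℂ) + (w:ℂ)*Complex.I)‖ := by
    rw [Complex.GammaSeq, norm_div, norm_mul, norm_prod]
    congr 1
    · congr 1
      · rw [show ((n:ℂ)) = (((n:ℝ)):ℂ) by push_cast; rfl,
          Complex.norm_cpow_eq_rpow_re_of_pos hnp]
        simp [hz]
      · simp
    · exact Finset.prod_congr rfl fun j _ => by rw [hzj j]
  have hprodpos : ∀ j ∈ Finset.range (n+1), (0:ℝ) < a + j := fun j _ => by positivity
  have hB : (0:ℝ) < ∏ j ∈ Finset.range (n+1),
      ‖(((a + j : ℝ):ℂ) + (w:ℂ)*Complex.I)‖ := by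
    apply Finset.prod_pos
    intro j hj
    rw [Complex.norm_add_mul_I]
    have : (0:ℝ) < (a+j)^2 + w^2 := by positivity
    positivity
  have hC : (0:ℝ) < ∏ j ∈ Finset.range (n+1), (a + (j:ℝ)) := Finset.prod_pos hprodpos
  have hA : (0:ℝ) < (n:ℝ)^a * (n.factorial : ℝ) := by positivity
  have hprod : ‖(Complex.GammaSeq z n)‖ / Real.GammaSeq a n
      = ∏ j ∈ Finset.range (n+1),
          ((a + j) / ‖(((a + j : ℝ):ℂ) + (w:ℂ)*Complex.I)‖) := by
    rw [habs, Real.GammaSeq, Finset.prod_div_distrib, div_div_div_comm, div_self hA.ne',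
      one_div, inv_div]
  rw [hprod, Real.log_prod]
  · rw [Finset.mul_sum]
    refine Finset.sum_congr rfl fun j hj => ?_
    exact my_term_eq (a + j) w (hprodpos j hj)
  · intro j hj
    refine div_ne_zero (hprodpos j hj).ne' ?_
    rw [Complex.norm_add_mul_I]
    have : (0:ℝ) < (a+j)^2 + w^2 := by positivity
    positivity

lemma my_reF_tendsto (a w : ℝ) (ha : 0 < a) :
    Tendsto (fun n : ℕ => -(1/2) * ∑ j ∈ Finset.range (n+1), Real.log (1 + w^2/(a+j)^2))
      atTop (nhds ((Fgamma a ((w : ℂ) * Complex.I)).re)) := by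
  set z : ℂ := (a:ℂ) + (w:ℂ)*Complex.I with hz
  have hzre : 0 < z.re := by simp [hz, ha]
  have hGz : Complex.Gamma z ≠ 0 := Complex.Gamma_ne_zero_of_re_pos hzre
  have hGz' : ‖(Complex.Gamma z)‖ ≠ 0 := by simpa using hGz
  have hGa : Real.Gamma a ≠ 0 := (Real.Gamma_pos_of_pos ha).ne'
  have h1 : Tendsto (fun n => ‖(Complex.GammaSeq z n)‖) atTop
      (nhds (‖(Complex.Gamma z)‖)) :=
    (continuous_norm.tendsto _).comp (Complex.GammaSeq_tendsto_Gamma z)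
  have h3 : Tendsto (fun n => ‖(Complex.GammaSeq z n)‖ / Real.GammaSeq a n) atTop
      (nhds (‖(Complex.Gamma z)‖ / Real.Gamma a)) :=
    h1.div (Real.GammaSeq_tendsto_Gamma a) hGa
  have hratio : ‖(Complex.Gamma z)‖ / Real.Gamma a ≠ 0 := div_ne_zero hGz' hGa
  have h4 : Tendsto (fun n => Real.log
      (‖(Complex.GammaSeq z n)‖ / Real.GammaSeq a n)) atTop
      (nhds (Real.log (‖(Complex.Gamma z)‖ / Real.Gamma a))) :=
    (Real.continuousAt_log hratio).tendsto.comp h3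
  have heq : Real.log (‖(Complex.Gamma z)‖ / Real.Gamma a)
      = (Fgamma a ((w : ℂ) * Complex.I)).re := by
    rw [Real.log_div hGz' hGa, my_reF_eq a ha w]
  rw [← heq]
  refine h4.congr' ?_
  filter_upwards [eventually_ge_atTop 1] with n hn
  exact my_logratio a w ha n hn

lemma my_integral_eval (v : ℝ) (hv : 0 < v) {a T : ℝ} (ha : 0 < a) (haT : a ≤ T) :
    ∫ t in a..T, Real.log (1 + v^2/t^2)
      = (T * Real.log (1+v^2/T^2) + 2*v*Real.arctan (T/v))
        - (a * Real.log (1+v^2/a^2) + 2*v*Real.arctan (a/v)) := by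
  have htpos : ∀ t ∈ Set.uIcc a T, 0 < t := by
    rw [Set.uIcc_of_le haT]; exact fun t ht => lt_of_lt_of_le ha ht.1
  have key : ∀ t ∈ Set.uIcc a T, HasDerivAt
      (fun t => t * Real.log (1+v^2/t^2) + 2*v*Real.arctan (t/v))
      (Real.log (1+v^2/t^2)) t := by
    intro t ht
    have ht0 : 0 < t := htpos t ht
    have h0 : HasDerivAt (fun t : ℝ => t^2) (2*t) t := by
      simpa using hasDerivAt_pow 2 t
    have hinv : HasDerivAt (fun t : ℝ => (t^2)⁻¹) (-(2*t)/(t^2)^2) t :=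
      h0.inv (by positivity)
    have h1 : HasDerivAt (fun t : ℝ => 1 + v^2/t^2)
        (v^2 * (-(2*t)/(t^2)^2)) t := by
      simpa [div_eq_mul_inv] using (hinv.const_mul (v^2)).const_add 1
    have hposarg : (0:ℝ) < 1 + v^2/t^2 := by positivity
    have hlog := h1.log hposarg.ne'
    have hmul := (hasDerivAt_id t).mul hlog
    have harct := (Real.hasDerivAt_arctan (t/v)).comp t ((hasDerivAt_id t).div_const v)
    have hfull := hmul.add (harct.const_mul (2*v))
    refine hfull.congr_deriv ?_
    simp only [id_eq]
    have h2 : (1:ℝ) + (t/v)^2 > 0 := by positivity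
    field_simp
    ring
  have hcont : ContinuousOn (fun t => Real.log (1 + v^2/t^2)) (Set.uIcc a T) := by
    apply ContinuousOn.log
    · exact continuousOn_const.add (continuousOn_const.div
        ((continuous_pow 2).continuousOn) (fun t ht => by
          have := htpos t ht; positivity))
    · intro t ht
      have := htpos t ht
      positivity
  exact intervalIntegral.integral_eq_sub_of_hasDerivAt key hcont.intervalIntegrable

lemma my_arctan_le_self {x : ℝ} (hx : 0 ≤ x) : Real.arctan x ≤ x := by
  rcases le_or_gt (π/2) x with h | h
  · exact (Real.arctan_lt_pi_div_two x).le.trans h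
  · calc Real.arctan x ≤ Real.arctan (Real.tan x) :=
          Real.arctan_strictMono.monotone (Real.le_tan hx h)
      _ = x := Real.arctan_tan (by linarith [Real.pi_pos]) h

lemma my_log_one_add_sq_div_le (v t : ℝ) (hv : 0 ≤ v) (ht : 0 < t) :
    Real.log (1 + v^2/t^2) ≤ 2 * (v/t) := by
  have h1 : 1 + v^2/t^2 ≤ (1 + v/t)^2 := by
    have hx : v^2/t^2 = (v/t)^2 := (div_pow v t 2).symm
    have : 0 ≤ v/t := by positivity
    rw [hx]; nlinarith
  have h2 : Real.log (1 + v^2/t^2) ≤ Real.log ((1 + v/t)^2) :=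
    Real.log_le_log (by positivity) h1
  rw [Real.log_pow] at h2
  have h3 : Real.log (1 + v/t) ≤ v/t := by
    have := Real.log_le_sub_one_of_pos (show (0:ℝ) < 1 + v/t by positivity)
    linarith
  push_cast at h2
  linarith

lemma my_int_upper (v : ℝ) (hv : 0 < v) {a T : ℝ} (ha : 0 < a) (haT : a ≤ T) :
    ∫ t in a..T, Real.log (1 + v^2/t^2) ≤ (2 + π) * v := by
  rw [my_integral_eval v hv ha haT]
  have hT : 0 < T := lt_of_lt_of_le ha haT
  have h1 : T * Real.log (1 + v^2/T^2) ≤ 2*v := by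
    have := my_log_one_add_sq_div_le v T hv.le hT
    calc T * Real.log (1 + v^2/T^2) ≤ T * (2*(v/T)) := by nlinarith
      _ = 2*v := by field_simp
  have h2 : 0 ≤ a * Real.log (1 + v^2/a^2) := by
    apply mul_nonneg ha.le
    apply Real.log_nonneg
    have : 0 ≤ v^2/a^2 := by positivity
    linarith
  have h3 : Real.arctan (T/v) ≤ π/2 := (Real.arctan_lt_pi_div_two _).le
  have h4 : 0 ≤ Real.arctan (a/v) := by
    rw [← Real.arctan_zero]; exact Real.arctan_strictMono.monotone (by positivity)
  nlinarith

lemma my_arctan_nonneg {x : ℝ} (hx : 0 ≤ x) : 0 ≤ Real.arctan x := by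
  rw [← Real.arctan_zero]; exact Real.arctan_strictMono.monotone hx

lemma my_int_lower (v : ℝ) (hv : 0 < v) {a T : ℝ} (ha : 0 < a) (haT : a ≤ T)
    (hT4 : 4*v ≤ T) :
    (π - 1/2) * v - (a * Real.log (1 + v^2/a^2) + 2*a)
      ≤ ∫ t in a..T, Real.log (1 + v^2/t^2) := by
  rw [my_integral_eval v hv ha haT]
  have hT : 0 < T := lt_of_lt_of_le (by positivity) hT4
  have h1 : 0 ≤ T * Real.log (1 + v^2/T^2) := by
    apply mul_nonneg hT.le
    apply Real.log_nonneg
    have : 0 ≤ v^2/T^2 := by positivity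
    linarith
  -- arctan (T/v) = π/2 - arctan (v/T) ≥ π/2 - v/T ≥ π/2 - 1/4
  have h2 : π/2 - 1/4 ≤ Real.arctan (T/v) := by
    have hpos : 0 < T/v := by positivity
    have heq : Real.arctan ((T/v)⁻¹) = π/2 - Real.arctan (T/v) :=
      Real.arctan_inv_of_pos hpos
    have hinv : ((T/v)⁻¹ : ℝ) = v/T := by field_simp
    have hle : Real.arctan (v/T) ≤ v/T := my_arctan_le_self (by positivity)
    have hvT : v/T ≤ 1/4 := by
      rw [div_le_div_iff₀ hT (by norm_num)]
      linarith
    rw [hinv] at heq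
    linarith
  have h3 : Real.arctan (a/v) ≤ a/v := my_arctan_le_self (by positivity)
  have h4 : 2*v*Real.arctan (a/v) ≤ 2*a := by
    calc 2*v*Real.arctan (a/v) ≤ 2*v*(a/v) := by nlinarith [my_arctan_nonneg (show (0:ℝ) ≤ a/v by positivity)]
      _ = 2*a := by field_simp
  nlinarith

lemma my_f_anti (v : ℝ) {a b : ℝ} (ha : 0 < a) :
    AntitoneOn (fun t => Real.log (1 + v^2/t^2)) (Set.Icc a b) := by
  intro x hx y hy hxy
  have hx0 : 0 < x := lt_of_lt_of_le ha hx.1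
  have hy0 : 0 < y := lt_of_lt_of_le ha hy.1
  apply Real.log_le_log (by positivity)
  have : v^2/y^2 ≤ v^2/x^2 := by
    apply div_le_div_of_nonneg_left (by positivity) (by positivity)
    nlinarith
  linarith

lemma my_sum_upper (v a : ℝ) (ha1 : 1 ≤ a) (hv1 : 1 ≤ v) (n : ℕ) :
    ∑ j ∈ Finset.range (n+1), Real.log (1 + v^2/(a+j)^2) ≤ (6 + 2*π) * v := by
  have ha : 0 < a := lt_of_lt_of_le one_pos ha1
  have hv : 0 < v := lt_of_lt_of_le one_pos hv1
  rw [Finset.sum_range_succ']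
  have h1 : ∑ i ∈ Finset.range n, Real.log (1 + v^2/(a+((i+1:ℕ)))^2)
      ≤ ∫ t in a..(a + n), Real.log (1 + v^2/t^2) :=
    AntitoneOn.sum_le_integral (my_f_anti v ha)
  have h2 : (∫ t in a..(a + n), Real.log (1 + v^2/t^2)) ≤ (2 + π) * v :=
    my_int_upper v hv ha (le_add_of_nonneg_right (Nat.cast_nonneg n))
  have h3 : Real.log (1 + v^2/(a+(0:ℕ))^2) ≤ 4 * v := by
    push_cast
    rw [add_zero]
    have hb : 1 + v^2/a^2 ≤ (2*v)^2 := by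
      have h4 : v^2/a^2 ≤ v^2 := by
        rw [div_le_iff₀ (by positivity)]
        have ha2 : 1 ≤ a^2 := by nlinarith
        nlinarith [sq_nonneg v]
      nlinarith
    calc Real.log (1 + v^2/a^2) ≤ Real.log ((2*v)^2) :=
          Real.log_le_log (by positivity) hb
      _ = 2 * Real.log (2*v) := by rw [Real.log_pow]; push_cast; ring
      _ ≤ 2 * (2*v - 1) := by
          have := Real.log_le_sub_one_of_pos (show (0:ℝ) < 2*v by positivity)
          linarith
      _ ≤ 4 * v := by linarith
  have hpi : 0 < π := Real.pi_pos
  calc (∑ i ∈ Finset.range n, Real.log (1 + v^2/(a+((i+1:ℕ)))^2))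
        + Real.log (1 + v^2/(a+(0:ℕ))^2)
      ≤ (2 + π) * v + 4 * v := by linarith
    _ ≤ (6 + 2*π) * v := by nlinarith

lemma my_sum_lower (v a : ℝ) (hv : 0 < v) (ha : 0 < a) (n : ℕ)
    (hT : 4*v ≤ a + (n+1:ℕ)) :
    (π - 1/2) * v - (a * Real.log (1 + v^2/a^2) + 2*a)
      ≤ ∑ j ∈ Finset.range (n+1), Real.log (1 + v^2/(a+j)^2) := by
  have h1 : (∫ t in a..(a + ((n+1:ℕ):ℝ)), Real.log (1 + v^2/t^2))
      ≤ ∑ i ∈ Finset.range (n+1), Real.log (1 + v^2/(a+i)^2) :=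
    AntitoneOn.integral_le_sum (my_f_anti v ha)
  have h2 := my_int_lower v hv ha (le_add_of_nonneg_right (Nat.cast_nonneg (n+1))) hT
  linarith

lemma my_small (δ : ℝ) (hδ : δ ∈ Set.Ioo (0:ℝ) 1) :
    ∃ A : ℝ, 2 ≤ A ∧ ∀ a v : ℝ, A ≤ a → a ^ (1+δ) ≤ v →
      4*a*(Real.log (2*v) + 1) ≤ v := by
  obtain ⟨hδ0, hδ1⟩ := hδ
  set ε : ℝ := δ/(2*(1+δ)) with hεdef
  have hε : 0 < ε := by positivity
  have hε1 : ε ≤ 1 := by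
    rw [hεdef, div_le_one (by positivity)]; linarith
  refine ⟨max 2 ((12/ε) ^ (1/ε)), le_max_left _ _, ?_⟩
  intro a v haA hav
  have ha2 : 2 ≤ a := le_trans (le_max_left _ _) haA
  have ha0 : 0 < a := by linarith
  have ha1 : 1 ≤ a := by linarith
  have hva : a ≤ v := by
    calc a = a ^ (1:ℝ) := (Real.rpow_one a).symm
      _ ≤ a ^ (1+δ) := Real.rpow_le_rpow_of_exponent_le ha1 (by linarith)
      _ ≤ v := hav
  have hv1 : 1 ≤ v := by linarith
  have hv0 : 0 < v := by linarith
  -- a ≤ v ^ (1/(1+δ))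
  have hainv : a ≤ v ^ (1/(1+δ)) := by
    have h1 : a = (a ^ (1+δ)) ^ (1/(1+δ)) := by
      rw [← Real.rpow_mul ha0.le, mul_one_div,
        div_self (by positivity : (1:ℝ)+δ ≠ 0), Real.rpow_one]
    rw [h1]
    exact Real.rpow_le_rpow (by positivity) hav (by positivity)
  -- 12/ε ≤ v ^ ε
  have h12 : 12/ε ≤ v ^ ε := by
    have hvA : (12/ε) ^ (1/ε) ≤ v := le_trans (le_trans (le_max_right _ _) haA) hva
    calc 12/ε = ((12/ε) ^ (1/ε)) ^ ε := by
          rw [← Real.rpow_mul (by positivity), one_div, inv_mul_cancel₀ hε.ne', Real.rpow_one]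
      _ ≤ v ^ ε := Real.rpow_le_rpow (by positivity) hvA hε.le
  have hveps1 : (1:ℝ) ≤ v ^ ε := by
    calc (1:ℝ) = 1 ^ ε := (Real.one_rpow ε).symm
      _ ≤ v ^ ε := Real.rpow_le_rpow zero_le_one hv1 hε.le
  -- log (2v) + 1 ≤ (3/ε) * v^ε
  have hlogv : Real.log v ≤ v ^ ε / ε := Real.log_le_rpow_div hv0.le hε
  have hlog2 : Real.log 2 ≤ 1 := by
    have := Real.log_le_sub_one_of_pos (show (0:ℝ) < 2 by norm_num); linarith
  have hlog2v : Real.log (2*v) + 1 ≤ (3/ε) * v ^ ε := by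
    rw [Real.log_mul (by norm_num) hv0.ne']
    have h2 : (2:ℝ) ≤ 2 * (v ^ ε / ε) := by
      rw [div_eq_mul_inv]
      have hm : ε * ε⁻¹ = 1 := mul_inv_cancel₀ hε.ne'
      have hinv0 : 0 ≤ ε⁻¹ := inv_nonneg.mpr hε.le
      have hinv1 : (1:ℝ) ≤ ε⁻¹ := by nlinarith
      nlinarith
    have : Real.log v ≤ v ^ ε / ε := hlogv
    have h3 : (3/ε) * v ^ ε = 3 * (v ^ ε / ε) := by ring
    rw [h3]
    nlinarith
  -- assemble
  have step1 : 4*a*(Real.log (2*v) + 1) ≤ (12/ε)*(a * v ^ ε) := by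
    have h0 : 0 ≤ Real.log (2*v) + 1 := by
      have : (0:ℝ) ≤ Real.log (2*v) := Real.log_nonneg (by linarith)
      linarith
    calc 4*a*(Real.log (2*v) + 1) ≤ 4*a*((3/ε) * v ^ ε) :=
          mul_le_mul_of_nonneg_left hlog2v (by positivity)
      _ = (12/ε)*(a * v ^ ε) := by ring
  have step2 : (12/ε)*(a * v ^ ε) ≤ v ^ ε * (v ^ (1/(1+δ)) * v ^ ε) := by
    calc (12/ε)*(a * v ^ ε) ≤ v ^ ε * (a * v ^ ε) :=
          mul_le_mul_of_nonneg_right h12 (by positivity)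
      _ ≤ v ^ ε * (v ^ (1/(1+δ)) * v ^ ε) := by
          apply mul_le_mul_of_nonneg_left
            (mul_le_mul_of_nonneg_right hainv (by positivity)) (by positivity)
  have step3 : v ^ ε * (v ^ (1/(1+δ)) * v ^ ε) = v := by
    rw [← Real.rpow_add hv0, ← Real.rpow_add hv0, ← Real.rpow_one v]
    congr 1
    rw [Real.rpow_one]
    rw [hεdef]
    field_simp
    ring
  linarith [step1, step2, step3.le, step3.ge]

theorem re_F_linear_bounds (δ : ℝ) (hδ : δ ∈ Set.Ioo (0 : ℝ) 1) :
    ∃ β₁ > (0 : ℝ), ∃ β₂ > (0 : ℝ), β₂ < β₁ ∧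
      ∃ A : ℝ, ∀ a : ℝ, A ≤ a → ∀ w : ℝ, a ^ (1 + δ) ≤ |w| →
        -β₁ * |w| ≤ (Fgamma a ((w : ℂ) * Complex.I)).re ∧
        (Fgamma a ((w : ℂ) * Complex.I)).re ≤ -β₂ * |w| := by
  obtain ⟨A, hA2, hAprop⟩ := my_small δ hδ
  have hpi := Real.pi_gt_three
  refine ⟨3+π, by linarith, 1, one_pos, by linarith, A, ?_⟩
  intro a haA w hw
  have ha2 : 2 ≤ a := le_trans hA2 haA
  have ha0 : 0 < a := by linarith
  have ha1 : 1 ≤ a := by linarith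
  set v := |w| with hvdef
  have hva : a ≤ v := by
    calc a = a ^ (1:ℝ) := (Real.rpow_one a).symm
      _ ≤ a ^ (1+δ) := Real.rpow_le_rpow_of_exponent_le ha1 (by linarith [hδ.1])
      _ ≤ v := hw
  have hv1 : 1 ≤ v := by linarith
  have hv0 : 0 < v := by linarith
  have hsmall := hAprop a v haA hw
  have hsq : w^2 = v^2 := (sq_abs w).symm
  have htend := my_reF_tendsto a w ha0
  simp only [hsq] at htend
  constructor
  · -- lower bound
    refine ge_of_tendsto htend ?_
    filter_upwards with n
    have h := my_sum_upper v a ha1 hv1 n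
    linarith
  · -- upper bound
    refine le_of_tendsto htend ?_
    filter_upwards [eventually_ge_atTop (Nat.ceil (4*v))] with n hn
    have hT : 4*v ≤ a + ((n+1:ℕ):ℝ) := by
      have h1 : (4*v) ≤ ((Nat.ceil (4*v) : ℕ):ℝ) := Nat.le_ceil _
      have h2 : ((Nat.ceil (4*v) : ℕ):ℝ) ≤ (n:ℝ) := Nat.cast_le.mpr hn
      push_cast
      linarith
    have hlow := my_sum_lower v a hv0 ha0 n hT
    have hb : 1 + v^2/a^2 ≤ (2*v)^2 := by
      have h4 : v^2/a^2 ≤ v^2 := by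
        rw [div_le_iff₀ (by positivity)]
        have ha2' : 1 ≤ a^2 := by nlinarith
        nlinarith [sq_nonneg v]
      nlinarith
    have hfa : Real.log (1+v^2/a^2) ≤ 2 * Real.log (2*v) := by
      calc Real.log (1+v^2/a^2) ≤ Real.log ((2*v)^2) :=
            Real.log_le_log (by positivity) hb
        _ = 2 * Real.log (2*v) := by rw [Real.log_pow]; push_cast; ring
    have h5 : a * Real.log (1+v^2/a^2) + 2*a ≤ v/2 := by
      have h6 : a * Real.log (1+v^2/a^2) ≤ a * (2*Real.log (2*v)) :=
        mul_le_mul_of_nonneg_left hfa ha0.le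
      linarith
    have h7 : 2*v ≤ ∑ j ∈ Finset.range (n+1), Real.log (1 + v^2/(a+j)^2) := by
      nlinarith
    linarith
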